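/- Let ε₀ ≠ 0, ω₀ = √(1+ε₀²), z^A(t) = (ε₀²/(1+ε₀²))cos(ω₀t) + 1/(1+ε₀²), and z^B(t) = cos(ε₀t). Then z^A(t) ≥ z^B(t) for all t ∈ [0, π/|ε₀|]. -/

import Mathlib

open Real

lemma sin_div_mono {s r : ℝ} (hs : 0 ≤ s) (hsr : s ≤ r) (hrπ : r ≤ π) :
    s * Real.sin r ≤ r * Real.sin s := by
  rcases eq_or_lt_of_le (hs.trans hsr) with h0 | h0
  · have : s = 0 := le_antisymm (hsr.trans h0.ge) hs
    simp [this, ← h0]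
  · have ha : (0:ℝ) ≤ s / r := div_nonneg hs h0.le
    have hb : (0:ℝ) ≤ 1 - s / r := by
      have : s / r ≤ 1 := (div_le_one h0).2 hsr
      linarith
    have key := strictConcaveOn_sin_Icc.concaveOn.2
      (Set.mem_Icc.2 ⟨h0.le, hrπ⟩) (Set.mem_Icc.2 ⟨le_rfl, Real.pi_pos.le⟩)
      ha hb (by ring)
    have hxy : (s / r) • r + (1 - s / r) • (0:ℝ) = s := by
      simp only [smul_eq_mul, mul_zero, add_zero]
      field_simp
    rw [hxy] at key
    simp only [smul_eq_mul, Real.sin_zero, mul_zero, add_zero] at key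
    calc s * Real.sin r = r * (s / r * Real.sin r) := by field_simp
    _ ≤ r * Real.sin s := by
        apply mul_le_mul_of_nonneg_left key h0.le

/-- key: `ω sin s ≥ e |sin r|` when `ω s = e r`, `0 ≤ s ≤ π/2`, `s ≤ r`, `0 < e ≤ ω`. -/
lemma key_ineq {e ω s r : ℝ} (he : 0 < e) (heω : e ≤ ω) (hs : 0 ≤ s) (hs2 : s ≤ π / 2)
    (hsr : s ≤ r) (heq : ω * s = e * r) : e * |Real.sin r| ≤ ω * Real.sin s := by
  have hω : 0 < ω := he.trans_le heω
  rcases le_or_gt r π with hrπ | hrπ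
  · have hsinr : 0 ≤ Real.sin r :=
      Real.sin_nonneg_of_nonneg_of_le_pi (hs.trans hsr) hrπ
    rw [abs_of_nonneg hsinr]
    rcases eq_or_lt_of_le (hs.trans hsr) with h0 | h0
    · have hseq : s = 0 := le_antisymm (hsr.trans h0.ge) hs
      have hreq : r = 0 := h0.symm
      simp [hseq, hreq]
    · have h := sin_div_mono hs hsr hrπ
      -- e * r * sin r ≤ ω * r * sin s  since ω * s = e * r
      have : e * r * Real.sin r ≤ ω * (r * Real.sin s) := by
        calc e * r * Real.sin r = ω * (s * Real.sin r) := by rw [← heq]; ring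
        _ ≤ ω * (r * Real.sin s) := by
            exact mul_le_mul_of_nonneg_left h hω.le
      have := (mul_le_mul_iff_right₀ h0).mp (by linarith [this] : r * (e * Real.sin r) ≤ r * (ω * Real.sin s))
      linarith
  · -- r > π : |sin r| ≤ 1, and ω sin s ≥ 2 ω s / π = 2 e r / π > 2 e ≥ e
    have h1 : |Real.sin r| ≤ 1 := Real.abs_sin_le_one r
    have hjordan : 2 / π * s ≤ Real.sin s := Real.mul_le_sin hs hs2
    have hπ : (0:ℝ) < π := Real.pi_pos
    have h2 : ω * (2 / π * s) ≤ ω * Real.sin s := mul_le_mul_of_nonneg_left hjordan hω.le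
    have h3 : ω * (2 / π * s) = 2 / π * (e * r) := by rw [← heq]; ring
    have h4 : 2 * e ≤ 2 / π * (e * r) := by
      rw [div_mul_eq_mul_div, le_div_iff₀ hπ]
      nlinarith
    calc e * |Real.sin r| ≤ e * 1 := mul_le_mul_of_nonneg_left h1 he.le
    _ ≤ 2 * e := by linarith
    _ ≤ ω * Real.sin s := by linarith

/-- Lemma 1: `z^A(t) = (ε₀²/(1+ε₀²))cos(ω₀t) + 1/(1+ε₀²)` dominates `z^B(t) = cos(ε₀t)`
on `[0, π/|ε₀|]`, where `ω₀ = √(1+ε₀²)`. -/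
theorem zA_ge_zB_const (ε₀ : ℝ) (hε₀ : ε₀ ≠ 0)
    (ω₀ : ℝ) (hω₀ : ω₀ = Real.sqrt (1 + ε₀ ^ 2)) :
    ∀ t ∈ Set.Icc 0 (π / |ε₀|),
      (ε₀ ^ 2 / (1 + ε₀ ^ 2)) * Real.cos (ω₀ * t) + 1 / (1 + ε₀ ^ 2) ≥ Real.cos (ε₀ * t) := by
  intro t ht
  obtain ⟨ht0, ht1⟩ := ht
  set e := |ε₀| with he_def
  have he : 0 < e := abs_pos.2 hε₀
  have hden : (0:ℝ) < 1 + ε₀ ^ 2 := by positivity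
  have hω_pos : 0 < ω₀ := by rw [hω₀]; positivity
  have hω_sq : ω₀ ^ 2 = 1 + ε₀ ^ 2 := by
    rw [hω₀, sq_sqrt hden.le]
  have he_sq : e ^ 2 = ε₀ ^ 2 := sq_abs ε₀
  have heω : e ≤ ω₀ := by nlinarith
  -- rewrite cos(ε₀ t) as cos(e t)
  have hcos : Real.cos (ε₀ * t) = Real.cos (e * t) := by
    rcases abs_choice ε₀ with h | h
    · rw [he_def, h]
    · rw [he_def, h, neg_mul, Real.cos_neg]
  rw [hcos]
  -- half-angle
  set s := e * t / 2 with hs_def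
  set r := ω₀ * t / 2 with hr_def
  have hcs : Real.cos (e * t) = 1 - 2 * Real.sin s ^ 2 := by
    have : e * t = 2 * s := by rw [hs_def]; ring
    rw [this, Real.cos_two_mul, Real.cos_sq']; ring
  have hcr : Real.cos (ω₀ * t) = 1 - 2 * Real.sin r ^ 2 := by
    have : ω₀ * t = 2 * r := by rw [hr_def]; ring
    rw [this, Real.cos_two_mul, Real.cos_sq']; ring
  rw [hcs, hcr]
  -- key inequality
  have hs0 : 0 ≤ s := by positivity
  have hs2 : s ≤ π / 2 := by
    have : e * t ≤ π := by
      have := (le_div_iff₀ he).1 ht1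
      linarith [this]
    rw [hs_def]; linarith
  have hsr : s ≤ r := by
    rw [hs_def, hr_def]
    have : e * t ≤ ω₀ * t := mul_le_mul_of_nonneg_right heω ht0
    linarith
  have heq : ω₀ * s = e * r := by rw [hs_def, hr_def]; ring
  have key := key_ineq he heω hs0 hs2 hsr heq
  have hsin_s : 0 ≤ Real.sin s := by
    apply Real.sin_nonneg_of_nonneg_of_le_pi hs0
    linarith [Real.pi_pos]
  have habs : 0 ≤ e * |Real.sin r| := by positivity
  have hsq := mul_self_le_mul_self habs key
  have h1 : (e * |Real.sin r|) * (e * |Real.sin r|) = ε₀ ^ 2 * Real.sin r ^ 2 := by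
    rw [← he_sq,
      show e * |Real.sin r| * (e * |Real.sin r|) = e ^ 2 * (|Real.sin r| * |Real.sin r|) from by
        ring, abs_mul_abs_self]
    ring
  have h2 : (ω₀ * Real.sin s) * (ω₀ * Real.sin s) = (1 + ε₀ ^ 2) * Real.sin s ^ 2 := by
    rw [← hω_sq]; ring
  rw [h1, h2] at hsq
  -- finish: goal is cos form
  rw [ge_iff_le, ← sub_nonneg]
  have expand : (ε₀ ^ 2 / (1 + ε₀ ^ 2)) * (1 - 2 * Real.sin r ^ 2) + 1 / (1 + ε₀ ^ 2)
      - (1 - 2 * Real.sin s ^ 2)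
      = (2 / (1 + ε₀ ^ 2)) * ((1 + ε₀ ^ 2) * Real.sin s ^ 2 - ε₀ ^ 2 * Real.sin r ^ 2) := by
    field_simp
    ring
  rw [expand]
  apply mul_nonneg (by positivity)
  linarith
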